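/- For p ≡ 1 or 2 (mod 4), the degree-p Taylor polynomial R(z)=\sum_{k=0}^p z^k/k! satisfies |R(iy)| > 1 for all sufficiently small y ≠ 0 real; hence the imaginary stability interval of order-p extrapolation is empty for such p. -/

import Mathlib

open Complex Finset

lemma exp_tail {n : ℕ} (hn : 0 < n) {z : ℂ} (hz : ‖z‖ ≤ 1) :
    ‖Complex.exp z - ∑ k ∈ range n, z ^ k / (Nat.factorial k : ℂ)‖
      ≤ 2 * ‖z‖ ^ n := by
  refine (Complex.exp_bound hz hn).trans ?_
  have h1 : (1:ℝ) ≤ (n:ℝ) := by exact_mod_cast hn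
  have h2 : (1:ℝ) ≤ (n.factorial:ℝ) := by exact_mod_cast n.factorial_pos
  have hc : ((n.succ : ℝ) * ((n.factorial :ℝ) * (n:ℝ))⁻¹) ≤ 2 := by
    rw [mul_inv_le_iff₀ (by positivity)]
    push_cast
    nlinarith
  have := pow_nonneg (norm_nonneg z) n
  calc ‖z‖ ^ n * ((n.succ : ℝ) * ((n.factorial:ℝ) * (n:ℝ))⁻¹)
      ≤ ‖z‖ ^ n * 2 := by gcongr
    _ = 2 * ‖z‖ ^ n := by ring

lemma final_step (c C : ℝ) (hc : 0 < c) (hC : 0 ≤ C) (e : ℕ) (he : Even e)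
    (S : ℝ → ℝ)
    (h : ∀ y : ℝ, |y| ≤ 1 → c * y ^ e - C * |y| ^ (e+1) ≤ S y - 1) :
    ∃ δ > (0:ℝ), ∀ y : ℝ, 0 < |y| → |y| < δ → 1 < S y := by
  refine ⟨min 1 (c/(C+1)), by positivity, ?_⟩
  intro y hy0 hyδ
  have h1 : |y| ≤ 1 := le_of_lt (lt_of_lt_of_le hyδ (min_le_left _ _))
  have h2 : |y| < c/(C+1) := lt_of_lt_of_le hyδ (min_le_right _ _)
  have h3 : (C+1) * |y| < c := by
    rw [div_eq_inv_mul] at h2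
    calc (C+1) * |y| < (C+1) * ((C+1)⁻¹ * c) := by gcongr
      _ = c := by field_simp
  have hkey := h y h1
  have hye : y ^ e = |y| ^ e := (he.pow_abs y).symm
  have hpow : 0 < |y| ^ e := pow_pos hy0 e
  have hps : |y| ^ (e+1) = |y| ^ e * |y| := pow_succ _ _
  nlinarith [mul_pos hpow hy0]

lemma key (p : ℕ) (hp : 1 ≤ p) (y : ℝ) (hy : |y| ≤ 1) :
    |Complex.normSq (∑ k ∈ range (p+1), (Complex.I * (y:ℂ)) ^ k / (Nat.factorial k : ℂ)) - 1
      + 2 * (((1 + Complex.I * (y:ℂ)) *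
          ((-(Complex.I * (y:ℂ))) ^ (p+1) / (((p+1).factorial : ℕ) : ℂ)
            + (-(Complex.I * (y:ℂ))) ^ (p+2) / (((p+2).factorial : ℕ) : ℂ))).re)|
      ≤ 30 * |y| ^ (p+3) := by
  set z : ℂ := Complex.I * (y:ℂ) with hzdef
  have hzabs : ‖z‖ = |y| := by
    rw [hzdef, norm_mul, Complex.norm_I, Complex.norm_real, Real.norm_eq_abs, one_mul]
  have hz1 : ‖z‖ ≤ 1 := by rw [hzabs]; exact hy
  set A : ℂ := z ^ (p+1) / (((p+1).factorial : ℕ) : ℂ) with hA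
  set B : ℂ := z ^ (p+2) / (((p+2).factorial : ℕ) : ℂ) with hB
  set E : ℂ := Complex.exp z - ∑ k ∈ range (p+3), z ^ k / (Nat.factorial k : ℂ) with hE
  set E₂ : ℂ := Complex.exp z - (1 + z) with hE₂
  have hEb : ‖E‖ ≤ 2 * |y| ^ (p+3) := by
    rw [hE, ← hzabs]; exact exp_tail (by omega) hz1
  have h12 : (∑ k ∈ range 2, z ^ k / (Nat.factorial k : ℂ)) = 1 + z := by
    simp [Finset.sum_range_succ]
  have hE₂b : ‖E₂‖ ≤ 2 * |y| ^ 2 := by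
    rw [hE₂, ← h12, ← hzabs]; exact exp_tail (by omega) hz1
  have hsum : (∑ k ∈ range (p+1), z ^ k / (Nat.factorial k : ℂ))
      = Complex.exp z - (E + B + A) := by
    have h3 : (∑ k ∈ range (p+3), z ^ k / (Nat.factorial k : ℂ))
        = (∑ k ∈ range (p+1), z ^ k / (Nat.factorial k : ℂ)) + A + B := by
      rw [show p+3 = (p+2)+1 by ring, Finset.sum_range_succ,
          show p+2 = (p+1)+1 by ring, Finset.sum_range_succ, hA, hB]
    rw [hE, h3]; ring
  have hconj : (starRingEnd ℂ) z = -z := by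
    rw [hzdef, map_mul, Complex.conj_I, Complex.conj_ofReal]; ring
  have hconjAB : (starRingEnd ℂ) (A + B)
      = (-z) ^ (p+1) / (((p+1).factorial : ℕ) : ℂ)
        + (-z) ^ (p+2) / (((p+2).factorial : ℕ) : ℂ) := by
    rw [map_add, hA, hB, map_div₀, map_div₀, map_pow, map_pow, hconj,
        Complex.conj_natCast, Complex.conj_natCast]
  have hexp1 : ‖Complex.exp z‖ = 1 := by
    rw [Complex.norm_exp, hzdef]
    simp [Complex.mul_re]
  have h1 : Complex.normSq (Complex.exp z) = 1 := by
    rw [← Complex.sq_norm, hexp1]; norm_num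
  have hmain : Complex.normSq (∑ k ∈ range (p+1), z ^ k / (Nat.factorial k : ℂ)) - 1
      + 2 * (((1 + z) * ((-z) ^ (p+1) / (((p+1).factorial : ℕ) : ℂ)
          + (-z) ^ (p+2) / (((p+2).factorial : ℕ) : ℂ))).re)
      = Complex.normSq (E + B + A)
        - 2 * ((E₂ * ((starRingEnd ℂ) (A+B)) + Complex.exp z * (starRingEnd ℂ) E).re) := by
    rw [hsum, Complex.normSq_sub, h1]
    have hre : (Complex.exp z * (starRingEnd ℂ) (E + B + A))
        = (1 + z) * ((starRingEnd ℂ) (A + B))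
          + (E₂ * (starRingEnd ℂ) (A+B) + Complex.exp z * (starRingEnd ℂ) E) := by
      have he : Complex.exp z = 1 + z + E₂ := by rw [hE₂]; ring
      have hsplit : E + B + A = E + (A + B) := by ring
      rw [hsplit, map_add]
      calc Complex.exp z * ((starRingEnd ℂ) E + (starRingEnd ℂ) (A+B))
          = (1 + z + E₂) * ((starRingEnd ℂ) E + (starRingEnd ℂ) (A+B)) := by rw [← he]
        _ = _ := by ring
    rw [hre, hconjAB, Complex.add_re]
    ring
  rw [hmain]
  -- now pure estimates
  have hy0 : (0:ℝ) ≤ |y| := abs_nonneg y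
  have hfac1 : (1:ℝ) ≤ (((p+1).factorial : ℕ) : ℝ) := by exact_mod_cast (p+1).factorial_pos
  have hfac2 : (1:ℝ) ≤ (((p+2).factorial : ℕ) : ℝ) := by exact_mod_cast (p+2).factorial_pos
  have hAb : ‖A‖ ≤ |y| ^ (p+1) := by
    rw [hA, norm_div, norm_pow, hzabs, Complex.norm_natCast]
    exact div_le_self (by positivity) hfac1
  have hBb : ‖B‖ ≤ |y| ^ (p+2) := by
    rw [hB, norm_div, norm_pow, hzabs, Complex.norm_natCast]
    exact div_le_self (by positivity) hfac2
  have e21 : |y| ^ (p+2) ≤ |y| ^ (p+1) := pow_le_pow_of_le_one hy0 hy (by omega)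
  have e31 : |y| ^ (p+3) ≤ |y| ^ (p+1) := pow_le_pow_of_le_one hy0 hy (by omega)
  have e2232 : |y| ^ (2*p+2) ≤ |y| ^ (p+3) := pow_le_pow_of_le_one hy0 hy (by omega)
  have hEBA : ‖E + B + A‖ ≤ 4 * |y| ^ (p+1) := by
    calc ‖E + B + A‖ ≤ ‖E + B‖ + ‖A‖ :=
          norm_add_le _ _
      _ ≤ ‖E‖ + ‖B‖ + ‖A‖ := by
          have := norm_add_le E B; linarith
      _ ≤ 2 * |y| ^ (p+3) + |y| ^ (p+2) + |y| ^ (p+1) := by linarith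
      _ ≤ 4 * |y| ^ (p+1) := by linarith
  have hnsq : Complex.normSq (E + B + A) ≤ 16 * |y| ^ (p+3) := by
    have h0 : (0:ℝ) ≤ ‖E + B + A‖ := norm_nonneg _
    have := mul_le_mul hEBA hEBA h0 (by positivity)
    rw [← Complex.sq_norm]
    calc ‖E + B + A‖ ^ 2 = ‖E + B + A‖ * ‖E + B + A‖ := sq _
      _ ≤ (4 * |y| ^ (p+1)) * (4 * |y| ^ (p+1)) := this
      _ = 16 * |y| ^ (2*p+2) := by rw [show 2*p+2 = (p+1)+(p+1) by ring, pow_add]; ring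
      _ ≤ 16 * |y| ^ (p+3) := by linarith
  have hABb : ‖A + B‖ ≤ 2 * |y| ^ (p+1) := by
    calc ‖A + B‖ ≤ ‖A‖ + ‖B‖ := norm_add_le _ _
      _ ≤ 2 * |y| ^ (p+1) := by linarith
  have hterm1 : ‖E₂ * (starRingEnd ℂ) (A+B)‖ ≤ 4 * |y| ^ (p+3) := by
    rw [norm_mul, Complex.norm_conj]
    calc ‖E₂‖ * ‖A+B‖ ≤ (2 * |y| ^ 2) * (2 * |y| ^ (p+1)) := by
          apply mul_le_mul hE₂b hABb (norm_nonneg _) (by positivity)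
      _ = 4 * |y| ^ (p+3) := by rw [show p+3 = 2+(p+1) by ring, pow_add]; ring
  have hterm2 : ‖Complex.exp z * (starRingEnd ℂ) E‖ ≤ 2 * |y| ^ (p+3) := by
    rw [norm_mul, Complex.norm_conj, hexp1, one_mul]; exact hEb
  have hre_bound : |(E₂ * ((starRingEnd ℂ) (A+B)) + Complex.exp z * (starRingEnd ℂ) E).re|
      ≤ 6 * |y| ^ (p+3) := by
    calc |(E₂ * ((starRingEnd ℂ) (A+B)) + Complex.exp z * (starRingEnd ℂ) E).re|
        ≤ ‖E₂ * ((starRingEnd ℂ) (A+B)) + Complex.exp z * (starRingEnd ℂ) E‖ :=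
          Complex.abs_re_le_norm _
      _ ≤ ‖E₂ * ((starRingEnd ℂ) (A+B))‖
            + ‖Complex.exp z * (starRingEnd ℂ) E‖ := norm_add_le _ _
      _ ≤ 6 * |y| ^ (p+3) := by linarith
  have hnsq0 : 0 ≤ Complex.normSq (E + B + A) := Complex.normSq_nonneg _
  rw [abs_le]
  constructor
  · have := abs_le.mp hre_bound
    linarith
  · have := abs_le.mp hre_bound
    linarith

lemma negI_pow_four : (-Complex.I) ^ 4 = 1 := by
  rw [show (4:ℕ) = 2*2 from rfl, pow_mul, neg_sq, Complex.I_sq]; norm_num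

lemma case1_re (p k : ℕ) (hpk : p = 4*k+1) (y : ℝ) :
    ((1 + Complex.I * (y:ℂ)) *
        ((-(Complex.I * (y:ℂ))) ^ (p+1) / (((p+1).factorial : ℕ) : ℂ)
          + (-(Complex.I * (y:ℂ))) ^ (p+2) / (((p+2).factorial : ℕ) : ℂ))).re
    = -(y^(p+1)) / (((p+1).factorial : ℕ) : ℝ) - y^(p+3) / (((p+2).factorial : ℕ) : ℝ) := by
  have hI1 : (-Complex.I) ^ (p+1) = -1 := by
    subst hpk
    rw [show 4*k+1+1 = 4*k+2 by ring, pow_add, pow_mul, negI_pow_four, one_pow, one_mul,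
        neg_sq, Complex.I_sq]
  have hI2 : (-Complex.I) ^ (p+2) = Complex.I := by
    subst hpk
    rw [show 4*k+1+2 = 4*k+3 by ring, pow_add, pow_mul, negI_pow_four, one_pow, one_mul,
        pow_succ, neg_sq, Complex.I_sq]
    ring
  have hexp : (1 + Complex.I * (y:ℂ)) *
        ((-(Complex.I * (y:ℂ))) ^ (p+1) / (((p+1).factorial : ℕ) : ℂ)
          + (-(Complex.I * (y:ℂ))) ^ (p+2) / (((p+2).factorial : ℕ) : ℂ))
      = Complex.ofReal (-(y^(p+1)) / (((p+1).factorial : ℕ) : ℝ)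
            - y^(p+3) / (((p+2).factorial : ℕ) : ℝ))
        + Complex.ofReal (y^(p+2) / (((p+2).factorial : ℕ) : ℝ)
            - y^(p+2) / (((p+1).factorial : ℕ) : ℝ)) * Complex.I := by
    rw [show -(Complex.I * (y:ℂ)) = (-Complex.I) * (y:ℂ) by ring, mul_pow, mul_pow, hI1, hI2]
    push_cast
    ring_nf
    rw [Complex.I_sq]
    ring
  rw [hexp]
  simp [← Complex.ofReal_pow]

lemma case2_re (p k : ℕ) (hpk : p = 4*k+2) (y : ℝ) :
    ((1 + Complex.I * (y:ℂ)) *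
        ((-(Complex.I * (y:ℂ))) ^ (p+1) / (((p+1).factorial : ℕ) : ℂ)
          + (-(Complex.I * (y:ℂ))) ^ (p+2) / (((p+2).factorial : ℕ) : ℂ))).re
    = y^(p+2) / (((p+2).factorial : ℕ) : ℝ) - y^(p+2) / (((p+1).factorial : ℕ) : ℝ) := by
  have hI1 : (-Complex.I) ^ (p+1) = Complex.I := by
    subst hpk
    rw [show 4*k+2+1 = 4*k+3 by ring, pow_add, pow_mul, negI_pow_four, one_pow, one_mul,
        pow_succ, neg_sq, Complex.I_sq]
    ring
  have hI2 : (-Complex.I) ^ (p+2) = 1 := by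
    subst hpk
    rw [show 4*k+2+2 = 4*(k+1) by ring, pow_mul, negI_pow_four, one_pow]
  have hexp : (1 + Complex.I * (y:ℂ)) *
        ((-(Complex.I * (y:ℂ))) ^ (p+1) / (((p+1).factorial : ℕ) : ℂ)
          + (-(Complex.I * (y:ℂ))) ^ (p+2) / (((p+2).factorial : ℕ) : ℂ))
      = Complex.ofReal (y^(p+2) / (((p+2).factorial : ℕ) : ℝ)
            - y^(p+2) / (((p+1).factorial : ℕ) : ℝ))
        + Complex.ofReal (y^(p+1) / (((p+1).factorial : ℕ) : ℝ)
            + y^(p+3) / (((p+2).factorial : ℕ) : ℝ)) * Complex.I := by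
    rw [show -(Complex.I * (y:ℂ)) = (-Complex.I) * (y:ℂ) by ring, mul_pow, mul_pow, hI1, hI2]
    push_cast
    ring_nf
    rw [Complex.I_sq]
    ring
  rw [hexp]
  simp [← Complex.ofReal_pow]

/-- For `p ≡ 1` or `2 (mod 4)`, the degree-`p` Taylor polynomial
`R(z) = ∑_{k=0}^p z^k/k!` satisfies `|R(iy)| > 1` for all sufficiently small
real `y ≠ 0`; hence the imaginary stability interval of order-`p`
extrapolation is empty for such `p`. -/
theorem taylor_poly_imag_instability (p : ℕ)
    (hp : p % 4 = 1 ∨ p % 4 = 2)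
    (R : ℂ → ℂ)
    (hR : ∀ z, R z = ∑ k ∈ Finset.range (p + 1), z ^ k / (Nat.factorial k : ℂ)) :
    ∃ δ > (0 : ℝ), ∀ y : ℝ, 0 < |y| → |y| < δ →
      1 < ‖R (Complex.I * y)‖ := by
  have hp1 : 1 ≤ p := by rcases hp with h | h <;> omega
  suffices h : ∃ δ > (0:ℝ), ∀ y : ℝ, 0 < |y| → |y| < δ →
      1 < Complex.normSq (R (Complex.I * y)) by
    obtain ⟨δ, hδ, hh⟩ := h
    refine ⟨δ, hδ, fun y h1 h2 => ?_⟩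
    have h3 := hh y h1 h2
    rw [← Complex.sq_norm] at h3
    nlinarith [norm_nonneg (R (Complex.I * y))]
  have ha' : (0:ℝ) < (((p+1).factorial : ℕ) : ℝ) := by exact_mod_cast (p+1).factorial_pos
  have hb' : (0:ℝ) < (((p+2).factorial : ℕ) : ℝ) := by exact_mod_cast (p+2).factorial_pos
  have hb1 : (1:ℝ) ≤ (((p+2).factorial : ℕ) : ℝ) := by exact_mod_cast (p+2).factorial_pos
  rcases hp with h1 | h2
  · -- p ≡ 1 mod 4
    obtain ⟨k, hk⟩ : ∃ k, p = 4*k+1 := ⟨p/4, by omega⟩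
    refine final_step (2 / (((p+1).factorial : ℕ) : ℝ)) 32 (by positivity) (by norm_num)
      (p+1) ⟨2*k+1, by omega⟩ _ ?_
    intro y hy
    have hkey := key p hp1 y hy
    rw [case1_re p k hk y] at hkey
    rw [hR]
    obtain ⟨hk1, hk2⟩ := abs_le.mp hkey
    have e1 : |y|^(p+3) ≤ |y|^(p+2) := pow_le_pow_of_le_one (abs_nonneg y) hy (by omega)
    have e3 : |2 * (y^(p+3) / (((p+2).factorial : ℕ) : ℝ))| ≤ 2 * |y|^(p+3) := by
      rw [abs_mul, abs_div, _root_.abs_pow]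
      have : |(2:ℝ)| = 2 := by norm_num
      rw [this, abs_of_pos hb']
      have : |y|^(p+3) / (((p+2).factorial : ℕ) : ℝ) ≤ |y|^(p+3) :=
        div_le_self (by positivity) hb1
      linarith
    obtain ⟨e3a, e3b⟩ := abs_le.mp e3
    have eq1 : 2 * (-(y ^ (p + 1)) / (((p+1).factorial : ℕ) : ℝ)
          - y^(p+3) / (((p+2).factorial : ℕ) : ℝ))
        = -((2 / (((p+1).factorial : ℕ) : ℝ)) * y^(p+1))
          - 2 * (y^(p+3) / (((p+2).factorial : ℕ) : ℝ)) := by ring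
    rw [eq1] at hk1 hk2
    linarith
  · -- p ≡ 2 mod 4
    obtain ⟨k, hk⟩ : ∃ k, p = 4*k+2 := ⟨p/4, by omega⟩
    have hab : (((p+1).factorial : ℕ) : ℝ) < (((p+2).factorial : ℕ) : ℝ) := by
      exact_mod_cast (Nat.factorial_lt (by omega)).mpr (by omega)
    have hcpos : (0:ℝ) < 2 / (((p+1).factorial : ℕ) : ℝ) - 2 / (((p+2).factorial : ℕ) : ℝ) := by
      have := div_lt_div_of_pos_left (by norm_num : (0:ℝ) < 2) ha' hab
      linarith
    refine final_step _ 30 hcpos (by norm_num) (p+2) ⟨2*k+2, by omega⟩ _ ?_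
    intro y hy
    have hkey := key p hp1 y hy
    rw [case2_re p k hk y] at hkey
    rw [hR]
    obtain ⟨hk1, hk2⟩ := abs_le.mp hkey
    have eq1 : 2 * (y^(p+2) / (((p+2).factorial : ℕ) : ℝ)
          - y^(p+2) / (((p+1).factorial : ℕ) : ℝ))
        = -((2 / (((p+1).factorial : ℕ) : ℝ) - 2 / (((p+2).factorial : ℕ) : ℝ)) * y^(p+2)) := by
      ring
    rw [eq1] at hk1 hk2
    linarith
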